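/- Let n ≥ 1, let V be a real vector space and let f : ℝ × S^{n−1} → V be any function. Define Φ : 𝒫^n → V by Φ(P) = Σ_{v ∈ 𝒩(P)} vol_{n−1}(F(P,v)) · f(h(P,v), v) for all P ∈ 𝒫^n. Then Φ is a valuation: Φ(P ∪ Q) + Φ(P ∩ Q) = Φ(P) + Φ(Q) for all P, Q ∈ 𝒫^n with P ∪ Q ∈ 𝒫^n. -/

import Mathlib

open scoped Pointwise
open MeasureTheory Set

noncomputable section

abbrev Euc (n : ℕ) := EuclideanSpace ℝ (Fin n)

/-- `P` is a convex polytope in `ℝ^n`: the convex hull of a nonempty finite set. -/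
def IsPolytope (n : ℕ) (P : Set (Euc n)) : Prop :=
  ∃ S : Finset (Euc n), S.Nonempty ∧ P = convexHull ℝ (S : Set (Euc n))

/-- Support function `h(K, u)`. -/
def suppFn {n : ℕ} (K : Set (Euc n)) (u : Euc n) : ℝ :=
  sSup ((fun x => (inner ℝ x u : ℝ)) '' K)

/-- The face `F(P, v) = P ∩ {x : ⟪x, v⟫ = h(P, v)}`. -/
def face {n : ℕ} (P : Set (Euc n)) (v : Euc n) : Set (Euc n) :=
  {x | x ∈ P ∧ (inner ℝ x v : ℝ) = suppFn P v}

/-- `(n-1)`-dimensional volume ((n-1)-dimensional Hausdorff measure). -/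
def voln1 {n : ℕ} (s : Set (Euc n)) : ℝ :=
  (Measure.hausdorffMeasure ((n : ℝ) - 1) s).toReal

/-- Dimension of a convex set: the rank of its vector span (direction of its affine hull). -/
def pdim {n : ℕ} (P : Set (Euc n)) : ℕ := Module.finrank ℝ (vectorSpan ℝ P)

/-- `𝒩(P)`: unit outer normals of facets of `P`. -/
def normals (n : ℕ) (P : Set (Euc n)) : Set (Euc n) :=
  {v | ‖v‖ = 1 ∧ pdim (face P v) = n - 1}

/-- Application of a matrix to a vector of `ℝ^n`. -/
def apM {n : ℕ} (A : Matrix (Fin n) (Fin n) ℝ) (x : Euc n) : Euc n :=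
  (EuclideanSpace.equiv (Fin n) ℝ).symm (A.mulVec (EuclideanSpace.equiv (Fin n) ℝ x))

/-- Image of a set under a matrix. -/
def mapM {n : ℕ} (A : Matrix (Fin n) (Fin n) ℝ) (P : Set (Euc n)) : Set (Euc n) :=
  apM A '' P

/-- The standard basis vectors `e i`. -/
def ee (n : ℕ) (i : Fin n) : Euc n := EuclideanSpace.single i 1

/-- The standard simplex `T^n = conv{o, e₁, …, e_n}`. -/
def stdSimp (n : ℕ) : Set (Euc n) := convexHull ℝ (insert 0 (Set.range (ee n)))

/-- `h(Π_p^{±,>} P, u)^p` (for `gt = true`) resp. `h(Π_p^{±,<} P, u)^p` (for `gt = false`),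
where `pos = true` gives the `+` (positive part) version and `pos = false` the `−` version. -/
def projFn (n : ℕ) (p : ℝ) (pos gt : Bool) (P : Set (Euc n)) (u : Euc n) : ℝ :=
  ∑ᶠ v ∈ {v | v ∈ normals n P ∧ (if gt then 0 < suppFn P v else suppFn P v < 0)},
    voln1 (face P v) * |suppFn P v| ^ (1 - p) *
      (max ((if pos then (1 : ℝ) else -1) * (inner ℝ v u : ℝ)) 0) ^ p

/-- `h(Π_p^± P, u)^p`, the (p-th power of the support function of the) asymmetric
`L_p`-projection body of `P ∈ 𝒫ⁿₒ`. -/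
def pipFn (n : ℕ) (p : ℝ) (pos : Bool) (P : Set (Euc n)) (u : Euc n) : ℝ :=
  ∑ᶠ v ∈ {v | v ∈ normals n P ∧ (0 : Euc n) ∉ face P v},
    voln1 (face P v) * suppFn P v ^ (1 - p) *
      (max ((if pos then (1 : ℝ) else -1) * (inner ℝ v u : ℝ)) 0) ^ p

/-- `Δ_p^± P`, where `pos = true` gives `Δ_p^+ = h(Π_p^{+,>}·)^p − h(Π_p^{−,<}·)^p` and
`pos = false` gives `Δ_p^- = h(Π_p^{−,>}·)^p − h(Π_p^{+,<}·)^p`. -/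
def delFn (n : ℕ) (p : ℝ) (pos : Bool) (P : Set (Euc n)) (u : Euc n) : ℝ :=
  projFn n p pos true P u - projFn n p (!pos) false P u

section Aux

variable {n : ℕ}

lemma IsPolytope.isCompact {P : Set (Euc n)} (h : IsPolytope n P) : IsCompact P := by
  obtain ⟨S, -, rfl⟩ := h
  exact S.finite_toSet.isCompact_convexHull ℝ

lemma IsPolytope.convex {P : Set (Euc n)} (h : IsPolytope n P) : Convex ℝ P := by
  obtain ⟨S, -, rfl⟩ := h; exact convex_convexHull ℝ _

lemma IsPolytope.nonempty {P : Set (Euc n)} (h : IsPolytope n P) : P.Nonempty := by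
  obtain ⟨S, ⟨x, hx⟩, rfl⟩ := h
  exact ⟨x, subset_convexHull ℝ _ hx⟩

lemma continuous_innerR (v : Euc n) : Continuous (fun x : Euc n => (inner ℝ x v : ℝ)) :=
  continuous_id.inner continuous_const

lemma bddAbove_innerImage {K : Set (Euc n)} (hK : IsCompact K) (v : Euc n) :
    BddAbove ((fun x => (inner ℝ x v : ℝ)) '' K) :=
  (hK.image (continuous_innerR v)).bddAbove

lemma inner_le_suppFn {K : Set (Euc n)} (hK : IsCompact K) {x : Euc n} (hx : x ∈ K)
    (v : Euc n) : (inner ℝ x v : ℝ) ≤ suppFn K v :=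
  le_csSup (bddAbove_innerImage hK v) ⟨x, hx, rfl⟩

lemma exists_suppFn {K : Set (Euc n)} (hK : IsCompact K) (hne : K.Nonempty) (v : Euc n) :
    ∃ x ∈ K, (inner ℝ x v : ℝ) = suppFn K v := by
  have h1 : sSup ((fun x => (inner ℝ x v : ℝ)) '' K) ∈ (fun x => (inner ℝ x v : ℝ)) '' K :=
    (hK.image (continuous_innerR v)).sSup_mem (hne.image _)
  obtain ⟨x, hx, hx2⟩ := h1
  exact ⟨x, hx, hx2⟩

lemma face_nonempty {K : Set (Euc n)} (hK : IsCompact K) (hne : K.Nonempty) (v : Euc n) :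
    (face K v).Nonempty := by
  obtain ⟨x, hx, hx2⟩ := exists_suppFn hK hne v
  exact ⟨x, hx, hx2⟩

lemma face_subset {K : Set (Euc n)} {v : Euc n} : face K v ⊆ K := fun _ hx => hx.1

lemma isClosed_face {K : Set (Euc n)} (hK : IsCompact K) (v : Euc n) :
    IsClosed (face K v) :=
  hK.isClosed.inter (isClosed_eq (continuous_innerR v) continuous_const)

lemma convex_face {K : Set (Euc n)} (hK : Convex ℝ K) (v : Euc n) :
    Convex ℝ (face K v) :=
  hK.inter (convex_hyperplane (⟨fun x y => inner_add_left x y v,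
    fun c x => real_inner_smul_left x v c⟩ : IsLinearMap ℝ fun x : Euc n => (inner ℝ x v : ℝ)) _)

lemma suppFn_union {K L : Set (Euc n)} (hKc : IsCompact K) (hKne : K.Nonempty)
    (hLc : IsCompact L) (hLne : L.Nonempty) (v : Euc n) :
    suppFn (K ∪ L) v = max (suppFn K v) (suppFn L v) := by
  simp only [suppFn]
  rw [Set.image_union, csSup_union (bddAbove_innerImage hKc v) (hKne.image _)
    (bddAbove_innerImage hLc v) (hLne.image _)]

end Aux
section Cases

variable {n : ℕ} {K L : Set (Euc n)} {v : Euc n}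

/-- In the strict case `h(L,v) < h(K,v)` with `K ∪ L` convex, `F(L,v) ⊆ K`. -/
lemma face_subset_of_lt (hKc : IsCompact K) (hKne : K.Nonempty) (hLc : IsCompact L)
    (hU : Convex ℝ (K ∪ L)) (hlt : suppFn L v < suppFn K v) :
    face L v ⊆ K := by
  intro x hx
  obtain ⟨y, hyK, hyv⟩ := exists_suppFn hKc hKne v
  have htend : Filter.Tendsto (fun t : ℝ => (1 - t) • x + t • y) (nhdsWithin 0 (Set.Ioi 0))
      (nhds x) := by
    have hc : Continuous (fun t : ℝ => (1 - t) • x + t • y) := by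
      continuity
    have := hc.tendsto 0
    simp only [sub_zero, one_smul, zero_smul, add_zero] at this
    exact this.mono_left nhdsWithin_le_nhds
  refine hKc.isClosed.mem_of_tendsto htend ?_
  filter_upwards [Ioo_mem_nhdsGT_of_mem (Set.mem_Ico.mpr ⟨le_refl (0:ℝ), zero_lt_one⟩)]
    with t ht
  have hmem : (1 - t) • x + t • y ∈ K ∪ L :=
    hU (Or.inr hx.1) (Or.inl hyK) (by linarith [ht.2]) (le_of_lt ht.1) (by ring)
  rcases hmem with h | h
  · exact h
  · exfalso
    have h1 : (inner ℝ ((1 - t) • x + t • y) v : ℝ)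
        = (1 - t) * suppFn L v + t * suppFn K v := by
      rw [inner_add_left, real_inner_smul_left, real_inner_smul_left, hx.2, hyv]
    have h2 := inner_le_suppFn hLc h v
    rw [h1] at h2
    nlinarith [ht.1]

lemma suppFn_union_of_lt (hKc : IsCompact K) (hKne : K.Nonempty) (hLc : IsCompact L)
    (hLne : L.Nonempty) (hlt : suppFn L v < suppFn K v) :
    suppFn (K ∪ L) v = suppFn K v := by
  rw [suppFn_union hKc hKne hLc hLne, max_eq_left hlt.le]

lemma face_union_of_lt (hKc : IsCompact K) (hKne : K.Nonempty) (hLc : IsCompact L)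
    (hLne : L.Nonempty) (hlt : suppFn L v < suppFn K v) :
    face (K ∪ L) v = face K v := by
  have hs := suppFn_union_of_lt hKc hKne hLc hLne hlt
  ext x
  constructor
  · rintro ⟨hx1 | hx1, hx2⟩
    · exact ⟨hx1, hx2.trans hs⟩
    · exfalso
      rw [hs] at hx2
      exact absurd (hx2 ▸ inner_le_suppFn hLc hx1 v) (not_le.mpr hlt)
  · rintro ⟨hx1, hx2⟩
    exact ⟨Or.inl hx1, by rw [hs, hx2]⟩

lemma suppFn_inter_of_lt (hKc : IsCompact K) (hKne : K.Nonempty) (hLc : IsCompact L)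
    (hLne : L.Nonempty) (hU : Convex ℝ (K ∪ L)) (hlt : suppFn L v < suppFn K v) :
    suppFn (K ∩ L) v = suppFn L v := by
  have hfL : face L v ⊆ K := face_subset_of_lt hKc hKne hLc hU hlt
  obtain ⟨x, hxf⟩ := face_nonempty hLc hLne v
  have hxKL : x ∈ K ∩ L := ⟨hfL hxf, hxf.1⟩
  apply le_antisymm
  · refine csSup_le ⟨_, Set.mem_image_of_mem _ hxKL⟩ ?_
    rintro y ⟨z, hz, rfl⟩
    exact inner_le_suppFn hLc hz.2 v
  · rw [← hxf.2]
    exact le_csSup (BddAbove.mono (Set.image_mono Set.inter_subset_right)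
      (bddAbove_innerImage hLc v)) ⟨x, hxKL, rfl⟩

lemma face_inter_of_lt (hKc : IsCompact K) (hKne : K.Nonempty) (hLc : IsCompact L)
    (hLne : L.Nonempty) (hU : Convex ℝ (K ∪ L)) (hlt : suppFn L v < suppFn K v) :
    face (K ∩ L) v = face L v := by
  have hfL : face L v ⊆ K := face_subset_of_lt hKc hKne hLc hU hlt
  have hs := suppFn_inter_of_lt hKc hKne hLc hLne hU hlt
  ext x
  constructor
  · rintro ⟨⟨hxK, hxL⟩, hx2⟩
    exact ⟨hxL, hx2.trans hs⟩
  · rintro ⟨hx1, hx2⟩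
    exact ⟨⟨hfL ⟨hx1, hx2⟩, hx1⟩, by rw [hs, hx2]⟩

end Cases
section EqCase

variable {n : ℕ} {K L : Set (Euc n)} {v : Euc n}

lemma suppFn_union_of_eq (hKc : IsCompact K) (hKne : K.Nonempty) (hLc : IsCompact L)
    (hLne : L.Nonempty) (heq : suppFn L v = suppFn K v) :
    suppFn (K ∪ L) v = suppFn K v := by
  rw [suppFn_union hKc hKne hLc hLne, heq, max_self]

lemma face_union_of_eq (hKc : IsCompact K) (hKne : K.Nonempty) (hLc : IsCompact L)
    (hLne : L.Nonempty) (heq : suppFn L v = suppFn K v) :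
    face (K ∪ L) v = face K v ∪ face L v := by
  have hs := suppFn_union_of_eq hKc hKne hLc hLne heq
  ext x
  constructor
  · rintro ⟨hx1 | hx1, hx2⟩
    · exact Or.inl ⟨hx1, hx2.trans hs⟩
    · exact Or.inr ⟨hx1, (hx2.trans hs).trans heq.symm⟩
  · rintro (⟨hx1, hx2⟩ | ⟨hx1, hx2⟩)
    · exact ⟨Or.inl hx1, by rw [hs, hx2]⟩
    · exact ⟨Or.inr hx1, by rw [hs, ← heq, hx2]⟩

lemma faces_inter_nonempty (hKc : IsCompact K) (hKne : K.Nonempty) (hLc : IsCompact L)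
    (hLne : L.Nonempty) (hU : Convex ℝ (K ∪ L)) (heq : suppFn L v = suppFn K v) :
    (face K v ∩ face L v).Nonempty := by
  obtain ⟨x, hx⟩ := face_nonempty hKc hKne v
  obtain ⟨y, hy⟩ := face_nonempty hLc hLne v
  have hseg : segment ℝ x y ⊆ face K v ∪ face L v := by
    rintro z ⟨s, t, hs, ht, hst, rfl⟩
    have hz : s • x + t • y ∈ K ∪ L :=
      hU (Or.inl hx.1) (Or.inr hy.1) hs ht hst
    have hzv : (inner ℝ (s • x + t • y) v : ℝ) = suppFn K v := by
      rw [inner_add_left, real_inner_smul_left, real_inner_smul_left, hx.2, hy.2, heq]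
      have : s * suppFn K v + t * suppFn K v = (s + t) * suppFn K v := by ring
      rw [this, hst, one_mul]
    rcases hz with h | h
    · exact Or.inl ⟨h, hzv⟩
    · exact Or.inr ⟨h, hzv.trans heq.symm⟩
  have hconn : IsPreconnected (segment ℝ x y) := (convex_segment x y).isPreconnected
  have := isPreconnected_closed_iff.mp hconn (face K v) (face L v)
    (isClosed_face hKc v) (isClosed_face hLc v) hseg
    ⟨x, left_mem_segment ℝ x y, hx⟩ ⟨y, right_mem_segment ℝ x y, hy⟩
  obtain ⟨z, -, hz⟩ := this
  exact ⟨z, hz⟩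

lemma suppFn_inter_of_eq (hKc : IsCompact K) (hKne : K.Nonempty) (hLc : IsCompact L)
    (hLne : L.Nonempty) (hU : Convex ℝ (K ∪ L)) (heq : suppFn L v = suppFn K v) :
    suppFn (K ∩ L) v = suppFn K v := by
  obtain ⟨x, hxK, hxL⟩ := faces_inter_nonempty hKc hKne hLc hLne hU heq
  have hxKL : x ∈ K ∩ L := ⟨hxK.1, hxL.1⟩
  apply le_antisymm
  · refine csSup_le ⟨_, Set.mem_image_of_mem _ hxKL⟩ ?_
    rintro y ⟨z, hz, rfl⟩
    exact inner_le_suppFn hKc hz.1 v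
  · rw [← hxK.2]
    exact le_csSup (BddAbove.mono (Set.image_mono Set.inter_subset_left)
      (bddAbove_innerImage hKc v)) ⟨x, hxKL, rfl⟩

lemma face_inter_of_eq (hKc : IsCompact K) (hKne : K.Nonempty) (hLc : IsCompact L)
    (hLne : L.Nonempty) (hU : Convex ℝ (K ∪ L)) (heq : suppFn L v = suppFn K v) :
    face (K ∩ L) v = face K v ∩ face L v := by
  have hs := suppFn_inter_of_eq hKc hKne hLc hLne hU heq
  ext x
  constructor
  · rintro ⟨⟨hxK, hxL⟩, hx2⟩
    exact ⟨⟨hxK, hx2.trans hs⟩, ⟨hxL, (hx2.trans hs).trans heq.symm⟩⟩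
  · rintro ⟨⟨hxK, hx2⟩, ⟨hxL, -⟩⟩
    exact ⟨⟨hxK, hxL⟩, by rw [hs, hx2]⟩

end EqCase
section Meas

open Module

variable {n : ℕ}

lemma finrank_perp_singleton {v : Euc n} (hv : v ≠ 0) :
    finrank ℝ ((Submodule.span ℝ {v})ᗮ) = n - 1 := by
  have h := Submodule.finrank_add_finrank_orthogonal (K := Submodule.span ℝ {v}) (𝕜 := ℝ)
  rw [finrank_span_singleton hv, finrank_euclideanSpace_fin] at h
  omega

lemma vectorSpan_le_orthogonal {S : Set (Euc n)} {v : Euc n} {c : ℝ}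
    (hS : ∀ x ∈ S, (inner ℝ x v : ℝ) = c) :
    vectorSpan ℝ S ≤ (Submodule.span ℝ {v})ᗮ := by
  rw [vectorSpan_def, Submodule.span_le]
  rintro u hu
  rw [Set.mem_vsub] at hu
  obtain ⟨x, hx, y, hy, rfl⟩ := hu
  refine SetLike.mem_coe.mpr (Submodule.mem_orthogonal_singleton_iff_inner_left.mpr ?_)
  show (inner ℝ (x - y) v : ℝ) = 0
  rw [inner_sub_left, hS x hx, hS y hy, sub_self]

lemma dimH_le_finrank_vectorSpan {S : Set (Euc n)} (hne : S.Nonempty) :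
    dimH S ≤ (finrank ℝ (vectorSpan ℝ S) : ENNReal) := by
  obtain ⟨x₀, hx₀⟩ := hne
  set W := vectorSpan ℝ S with hW
  have hsub : S ⊆ (fun u : Euc n => x₀ + u) '' (W : Set (Euc n)) := by
    intro y hy
    refine ⟨y - x₀, ?_, by module⟩
    simpa [vsub_eq_sub] using vsub_mem_vectorSpan ℝ hy hx₀
  have hiso : Isometry (fun u : Euc n => x₀ + u) :=
    Isometry.of_dist_eq fun a b => dist_add_left x₀ a b
  calc dimH S ≤ dimH ((fun u : Euc n => x₀ + u) '' (W : Set (Euc n))) := dimH_mono hsub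
    _ = dimH (W : Set (Euc n)) := hiso.dimH_image _
    _ = dimH (Subtype.val '' (Set.univ : Set W)) := by
        rw [Set.image_univ, Subtype.range_coe]
    _ = dimH (Set.univ : Set W) := isometry_subtype_coe.dimH_image _
    _ = (finrank ℝ W : ENNReal) := by rw [Real.dimH_univ_eq_finrank]

lemma hmeas_zero_of_pdim_ne (hn : 1 ≤ n) {S : Set (Euc n)} {v : Euc n} {c : ℝ}
    (hv : ‖v‖ = 1) (hS : ∀ x ∈ S, (inner ℝ x v : ℝ) = c) (hd : pdim S ≠ n - 1) :
    μH[(n : ℝ) - 1] S = 0 := by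
  rcases S.eq_empty_or_nonempty with rfl | hne
  · simp
  have hv0 : v ≠ 0 := fun h => by simp [h] at hv
  have hle : finrank ℝ (vectorSpan ℝ S) ≤ n - 1 := by
    have := Submodule.finrank_mono (vectorSpan_le_orthogonal hS)
    rwa [finrank_perp_singleton hv0] at this
  have hlt : finrank ℝ (vectorSpan ℝ S) < n - 1 := lt_of_le_of_ne hle hd
  have hcast : ((n - 1 : ℕ) : ℝ) = (n : ℝ) - 1 := by
    push_cast [hn]
    ring
  rw [← hcast]
  have hdim : dimH S < (((n - 1 : ℕ) : NNReal) : ENNReal) := by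
    refine lt_of_le_of_lt (dimH_le_finrank_vectorSpan hne) ?_
    exact_mod_cast hlt
  have h0 := hausdorffMeasure_of_dimH_lt hdim
  rw [NNReal.coe_natCast] at h0
  exact h0

lemma voln1_zero_of_pdim_ne (hn : 1 ≤ n) {S : Set (Euc n)} {v : Euc n} {c : ℝ}
    (hv : ‖v‖ = 1) (hS : ∀ x ∈ S, (inner ℝ x v : ℝ) = c) (hd : pdim S ≠ n - 1) :
    voln1 S = 0 := by
  unfold voln1
  rw [hmeas_zero_of_pdim_ne hn hv hS hd]
  simp

lemma hmeas_bounded_ne_top {m : ℕ} (hn : 1 ≤ n) (hd0 : 0 ≤ (n : ℝ) - 1) (hm : m = n - 1)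
    {s : Set (EuclideanSpace ℝ (Fin m))} (hs : Bornology.IsBounded s) :
    μH[(n : ℝ) - 1] s ≠ ⊤ := by
  classical
  set ι := (EuclideanSpace.equiv (Fin m) ℝ)
  set ψ := ι.symm.toContinuousLinearMap
  have him : s ⊆ ⇑ψ '' (⇑ι.toContinuousLinearMap '' s) := by
    intro x hx
    exact ⟨ι x, ⟨x, hx, rfl⟩, by simp [ψ, ι]⟩
  have h2 := (ψ.lipschitz).hausdorffMeasure_image_le hd0 (⇑ι.toContinuousLinearMap '' s)
  have hb2 : Bornology.IsBounded (⇑ι.toContinuousLinearMap '' s) :=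
    (ι.toContinuousLinearMap.lipschitz).isBounded_image hs
  obtain ⟨R2, hR2⟩ := (Metric.isBounded_iff_subset_closedBall 0).mp hb2
  have hidx : (n : ℝ) - 1 = (Fintype.card (Fin m) : ℝ) := by
    rw [Fintype.card_fin, hm, Nat.cast_sub hn]
    push_cast
    ring
  have hvol : μH[(n : ℝ) - 1] (⇑ι.toContinuousLinearMap '' s) ≠ ⊤ := by
    rw [hidx, MeasureTheory.hausdorffMeasure_pi_real]
    exact ne_top_of_le_ne_top
      ((isCompact_closedBall (0 : Fin m → ℝ) R2).measure_lt_top.ne)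
      (measure_mono hR2)
  refine ne_top_of_le_ne_top ?_ (measure_mono him)
  refine ne_top_of_le_ne_top ?_ h2
  exact ENNReal.mul_ne_top (ENNReal.rpow_ne_top_of_nonneg hd0 ENNReal.coe_ne_top) hvol

lemma hmeas_ne_top (hn : 1 ≤ n) {S : Set (Euc n)} {v : Euc n} {c : ℝ}
    (hv : ‖v‖ = 1) (hb : Bornology.IsBounded S) (hS : ∀ x ∈ S, (inner ℝ x v : ℝ) = c) :
    μH[(n : ℝ) - 1] S ≠ ⊤ := by
  classical
  have hd0 : 0 ≤ (n : ℝ) - 1 := by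
    have : (1 : ℝ) ≤ (n : ℝ) := by exact_mod_cast hn
    linarith
  have hv0 : v ≠ 0 := fun h => by simp [h] at hv
  set W := (Submodule.span ℝ {v})ᗮ with hW
  have hmW : finrank ℝ W = n - 1 := finrank_perp_singleton hv0
  set e := (stdOrthonormalBasis ℝ W).repr with he
  set g : EuclideanSpace ℝ (Fin (finrank ℝ W)) → Euc n :=
    fun y => c • v + ((e.symm y : W) : Euc n) with hg
  have hgiso : Isometry g := by
    refine Isometry.of_dist_eq fun y₁ y₂ => ?_
    rw [hg]
    simp only []
    rw [dist_add_left, ← Subtype.dist_eq, e.symm.dist_map]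
  obtain ⟨R, hR⟩ := (Metric.isBounded_iff_subset_closedBall 0).mp hb
  have hsub : S ⊆ g '' Metric.closedBall 0 (R + |c|) := by
    intro x hx
    have hxW : x - c • v ∈ W := by
      refine Submodule.mem_orthogonal_singleton_iff_inner_left.mpr ?_
      rw [inner_sub_left, real_inner_smul_left, hS x hx, real_inner_self_eq_norm_sq, hv]
      ring
    refine ⟨e ⟨x - c • v, hxW⟩, ?_, ?_⟩
    · rw [Metric.mem_closedBall, dist_zero_right]
      have hnrm : ‖e ⟨x - c • v, hxW⟩‖ = ‖x - c • v‖ := e.norm_map _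
      rw [hnrm]
      have hx' : ‖x‖ ≤ R := by
        have := hR hx
        rwa [Metric.mem_closedBall, dist_zero_right] at this
      calc ‖x - c • v‖ ≤ ‖x‖ + ‖c • v‖ := norm_sub_le _ _
        _ ≤ R + |c| := by
            rw [norm_smul, hv, mul_one, Real.norm_eq_abs]
            exact add_le_add hx' le_rfl
    · rw [hg]
      simp only []
      rw [e.symm_apply_apply]
      simp
  refine ne_top_of_le_ne_top ?_ (measure_mono hsub)
  rw [hgiso.hausdorffMeasure_image (Or.inl hd0)]
  exact hmeas_bounded_ne_top hn hd0 hmW Metric.isBounded_closedBall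

lemma voln1_ne_top (hn : 1 ≤ n) {S : Set (Euc n)} {v : Euc n} {c : ℝ}
    (hv : ‖v‖ = 1) (hb : Bornology.IsBounded S) (hS : ∀ x ∈ S, (inner ℝ x v : ℝ) = c) :
    μH[(n : ℝ) - 1] S ≠ ⊤ := hmeas_ne_top hn hv hb hS

lemma voln1_union_inter (hn : 1 ≤ n) {A B : Set (Euc n)} {v : Euc n} {c : ℝ}
    (hv : ‖v‖ = 1) (hA : IsClosed A) (hB : IsClosed B)
    (hAb : Bornology.IsBounded A) (hBb : Bornology.IsBounded B)
    (hAs : ∀ x ∈ A, (inner ℝ x v : ℝ) = c) (hBs : ∀ x ∈ B, (inner ℝ x v : ℝ) = c) :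
    voln1 (A ∪ B) + voln1 (A ∩ B) = voln1 A + voln1 B := by
  have hAm : μH[(n : ℝ) - 1] A ≠ ⊤ := hmeas_ne_top hn hv hAb hAs
  have hBm : μH[(n : ℝ) - 1] B ≠ ⊤ := hmeas_ne_top hn hv hBb hBs
  have hUm : μH[(n : ℝ) - 1] (A ∪ B) ≠ ⊤ :=
    ne_top_of_le_ne_top (ENNReal.add_ne_top.mpr ⟨hAm, hBm⟩) (measure_union_le A B)
  have hIm : μH[(n : ℝ) - 1] (A ∩ B) ≠ ⊤ :=
    ne_top_of_le_ne_top hAm (measure_mono Set.inter_subset_left)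
  have key := measure_union_add_inter (μ := μH[(n : ℝ) - 1]) A hB.measurableSet
  unfold voln1
  rw [← ENNReal.toReal_add hUm hIm, ← ENNReal.toReal_add hAm hBm, key]

end Meas
section Pointwise

variable {n : ℕ} {V : Type*} [AddCommGroup V] [Module ℝ V]

/-- Contribution of direction `v` to the valuation. -/
def contrib (n : ℕ) (f : ℝ → Euc n → V) (P : Set (Euc n)) (v : Euc n) : V :=
  Set.indicator (normals n P) (fun v => voln1 (face P v) • f (suppFn P v) v) v

lemma contrib_congr (f : ℝ → Euc n → V) {K L : Set (Euc n)} {v : Euc n}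
    (hface : face K v = face L v) (hsupp : suppFn K v = suppFn L v) :
    contrib n f K v = contrib n f L v := by
  classical
  unfold contrib
  rw [Set.indicator_apply, Set.indicator_apply]
  have hiff : (v ∈ normals n K) ↔ (v ∈ normals n L) := by
    unfold normals
    rw [Set.mem_setOf_eq, Set.mem_setOf_eq, hface]
  split_ifs with h1 h2 h2
  · rw [hface, hsupp]
  · exact absurd (hiff.mp h1) h2
  · exact absurd (hiff.mpr h2) h1
  · rfl

lemma contrib_eq_of_unit (hn : 1 ≤ n) (f : ℝ → Euc n → V) {P : Set (Euc n)} {v : Euc n}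
    (hv : ‖v‖ = 1) :
    contrib n f P v = voln1 (face P v) • f (suppFn P v) v := by
  classical
  unfold contrib
  rw [Set.indicator_apply]
  split_ifs with h
  · rfl
  · have hd : pdim (face P v) ≠ n - 1 := fun hc => h ⟨hv, hc⟩
    rw [voln1_zero_of_pdim_ne hn hv (fun x hx => hx.2) hd, zero_smul]

lemma contrib_of_not_unit (f : ℝ → Euc n → V) {P : Set (Euc n)} {v : Euc n}
    (hv : ‖v‖ ≠ 1) : contrib n f P v = 0 :=
  Set.indicator_of_notMem (fun h => hv h.1) _

lemma key_ge (hn : 1 ≤ n) (f : ℝ → Euc n → V) {K L : Set (Euc n)} {v : Euc n}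
    (hKc : IsCompact K) (hKne : K.Nonempty)
    (hLc : IsCompact L) (hLne : L.Nonempty)
    (hU : Convex ℝ (K ∪ L)) (hv : ‖v‖ = 1)
    (hba : suppFn L v ≤ suppFn K v) :
    contrib n f (K ∪ L) v + contrib n f (K ∩ L) v
      = contrib n f K v + contrib n f L v := by
  rcases eq_or_lt_of_le hba with heq | hlt
  · have hsU := suppFn_union_of_eq hKc hKne hLc hLne heq
    have hfU := face_union_of_eq hKc hKne hLc hLne heq
    have hsI := suppFn_inter_of_eq hKc hKne hLc hLne hU heq
    have hfI := face_inter_of_eq hKc hKne hLc hLne hU heq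
    have hadd := voln1_union_inter hn (A := face K v) (B := face L v)
      (c := suppFn K v) hv (isClosed_face hKc v) (isClosed_face hLc v)
      (hKc.isBounded.subset face_subset) (hLc.isBounded.subset face_subset)
      (fun x hx => hx.2) (fun x hx => hx.2.trans heq)
    rw [contrib_eq_of_unit hn f hv (P := K ∪ L), contrib_eq_of_unit hn f hv (P := K ∩ L),
        contrib_eq_of_unit hn f hv (P := K), contrib_eq_of_unit hn f hv (P := L),
        hsU, hsI, hfU, hfI, heq, ← add_smul, ← add_smul, hadd]
  · have h1 := contrib_congr f (face_union_of_lt hKc hKne hLc hLne hlt)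
      (suppFn_union_of_lt hKc hKne hLc hLne hlt)
    have h2 := contrib_congr f (face_inter_of_lt hKc hKne hLc hLne hU hlt)
      (suppFn_inter_of_lt hKc hKne hLc hLne hU hlt)
    rw [h1, h2]

lemma key_pointwise (hn : 1 ≤ n) (f : ℝ → Euc n → V) {K L : Set (Euc n)}
    (hKc : IsCompact K) (hKne : K.Nonempty)
    (hLc : IsCompact L) (hLne : L.Nonempty)
    (hU : Convex ℝ (K ∪ L)) (v : Euc n) :
    contrib n f (K ∪ L) v + contrib n f (K ∩ L) v
      = contrib n f K v + contrib n f L v := by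
  by_cases hv : ‖v‖ = 1
  · rcases le_total (suppFn L v) (suppFn K v) with h | h
    · exact key_ge hn f hKc hKne hLc hLne hU hv h
    · have hU' : Convex ℝ (L ∪ K) := Set.union_comm K L ▸ hU
      have := key_ge hn f hLc hLne hKc hKne hU' hv h
      rw [Set.union_comm L K, Set.inter_comm L K] at this
      rw [this]
      exact add_comm _ _
  · rw [contrib_of_not_unit f hv, contrib_of_not_unit f hv,
        contrib_of_not_unit f hv, contrib_of_not_unit f hv]

end Pointwise
section Finiteness

variable {n : ℕ}

open Module

lemma face_convexHull_filter (S : Finset (Euc n)) (v : Euc n) :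
    face (convexHull ℝ (S : Set (Euc n))) v
      = convexHull ℝ ((S.filter (fun x =>
          (inner ℝ x v : ℝ) = suppFn (convexHull ℝ (S : Set (Euc n))) v)) : Set (Euc n)) := by
  classical
  set P := convexHull ℝ (S : Set (Euc n)) with hP
  have hPc : IsCompact P := S.finite_toSet.isCompact_convexHull ℝ
  set h := suppFn P v with hh
  set T := S.filter (fun x => (inner ℝ x v : ℝ) = h) with hT
  apply Set.Subset.antisymm
  · rintro x ⟨hxP, hxv⟩
    rw [hP, Finset.convexHull_eq] at hxP
    obtain ⟨w, hw0, hw1, hwx⟩ := hxP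
    rw [Finset.centerMass_eq_of_sum_1 _ _ hw1] at hwx
    have hinner : ∑ y ∈ S, w y * (inner ℝ y v : ℝ) = h := by
      rw [hh, ← hxv, ← hwx]
      rw [sum_inner]
      exact Finset.sum_congr rfl fun y _ => (real_inner_smul_left y v (w y)).symm
    have hle : ∀ y ∈ S, (inner ℝ y v : ℝ) ≤ h :=
      fun y hy => inner_le_suppFn hPc (subset_convexHull ℝ _ hy) v
    have hzero : ∀ y ∈ S, w y * (h - (inner ℝ y v : ℝ)) = 0 := by
      have hsum : ∑ y ∈ S, w y * (h - (inner ℝ y v : ℝ)) = 0 := by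
        have : ∑ y ∈ S, w y * (h - (inner ℝ y v : ℝ))
            = (∑ y ∈ S, w y) * h - ∑ y ∈ S, w y * (inner ℝ y v : ℝ) := by
          rw [Finset.sum_mul, ← Finset.sum_sub_distrib]
          exact Finset.sum_congr rfl fun y _ => by ring
        rw [this, hw1, one_mul, hinner, sub_self]
      exact fun y hy => (Finset.sum_eq_zero_iff_of_nonneg fun i hi =>
        mul_nonneg (hw0 i hi) (sub_nonneg.mpr (hle i hi))).mp hsum y hy
    have hwzero : ∀ y ∈ S, y ∉ T → w y = 0 := by
      intro y hy hyT
      have hne : (inner ℝ y v : ℝ) ≠ h := by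
        intro hc
        exact hyT (Finset.mem_filter.mpr ⟨hy, hc⟩)
      have := hzero y hy
      rcases mul_eq_zero.mp this with h' | h'
      · exact h'
      · exact absurd (by linarith [sub_eq_zero.mp h'] : (inner ℝ y v : ℝ) = h) hne
    have hsumT : ∑ y ∈ T, w y = 1 := by
      rw [← hw1]
      exact Finset.sum_subset (Finset.filter_subset _ _) (fun y hy hyT => hwzero y hy hyT)
    have hx2 : T.centerMass w id = x := by
      rw [Finset.centerMass_eq_of_sum_1 _ _ hsumT, ← hwx]
      exact Finset.sum_subset (Finset.filter_subset _ _)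
        (fun y hy hyT => by rw [hwzero y hy hyT, zero_smul])
    rw [← hx2]
    exact T.centerMass_mem_convexHull (fun i hi => hw0 i (Finset.filter_subset _ _ hi))
      (by rw [hsumT]; norm_num) (fun i hi => Finset.mem_coe.mpr hi)
  · apply convexHull_min
    · intro x hx
      rw [Finset.mem_coe, Finset.mem_filter] at hx
      exact ⟨subset_convexHull ℝ _ hx.1, hx.2⟩
    · exact convex_face (convex_convexHull ℝ _) v

end Finiteness
section NormalsFinite

variable {n : ℕ}

open Module

lemma mem_orthogonal_vectorSpan_face {P : Set (Euc n)} {w : Euc n} :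
    w ∈ (vectorSpan ℝ (face P w))ᗮ := by
  have hle : vectorSpan ℝ (face P w) ≤ (Submodule.span ℝ {w})ᗮ :=
    vectorSpan_le_orthogonal (fun x hx => hx.2)
  have h1 : (Submodule.span ℝ {w})ᗮᗮ ≤ (vectorSpan ℝ (face P w))ᗮ :=
    Submodule.orthogonal_le hle
  exact h1 (Submodule.le_orthogonal_orthogonal _ (Submodule.mem_span_singleton_self w))

lemma normals_finite {P : Set (Euc n)} (hP : IsPolytope n P) :
    (normals n P).Finite := by
  classical
  obtain ⟨S, hSne, rfl⟩ := hP
  set P := convexHull ℝ (S : Set (Euc n)) with hPdef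
  set C : Finset (Euc n) → Set (Euc n) :=
    fun t => {v | v ∈ normals n P ∧ face P v = convexHull ℝ (t : Set (Euc n))} with hC
  have hcover : normals n P ⊆ ⋃ t ∈ (S.powerset : Finset (Finset (Euc n))), C t := by
    intro v hv
    have hvC : v ∈ C (S.filter (fun x => (inner ℝ x v : ℝ) = suppFn P v)) :=
      ⟨hv, face_convexHull_filter S v⟩
    exact Set.mem_biUnion (Finset.mem_coe.mpr (Finset.mem_powerset.mpr
      (Finset.filter_subset _ _))) hvC
  refine Set.Finite.subset (Set.Finite.biUnion (S.powerset.finite_toSet) fun t _ => ?_) hcover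
  rcases (C t).eq_empty_or_nonempty with hemp | ⟨v₀, hv₀⟩
  · rw [hemp]; exact Set.finite_empty
  refine Set.Finite.subset ((Set.finite_singleton (-v₀)).insert v₀) ?_
  intro v hv
  have hff : face P v = face P v₀ := hv.2.trans hv₀.2.symm
  set D := vectorSpan ℝ (face P v₀) with hD
  have hdim : finrank ℝ D = n - 1 := hv₀.1.2
  have hn1 : 1 ≤ n := by
    by_contra hcon
    have hn0 : n = 0 := by omega
    subst hn0
    have : finrank ℝ (Euc 0) = 0 := by simp [finrank_euclideanSpace_fin]
    have hv1 : ‖v₀‖ = 1 := hv₀.1.1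
    have : v₀ = 0 := Subsingleton.elim _ _
    rw [this] at hv1
    simp at hv1
  have hv₀D : v₀ ∈ Dᗮ := mem_orthogonal_vectorSpan_face
  have hvD : v ∈ Dᗮ := by
    rw [hD, ← hff]
    exact mem_orthogonal_vectorSpan_face
  have hdimperp : finrank ℝ Dᗮ = 1 := by
    have h := Submodule.finrank_add_finrank_orthogonal (K := D) (𝕜 := ℝ)
    rw [hdim, finrank_euclideanSpace_fin] at h
    omega
  have hv₀ne : v₀ ≠ 0 := by
    intro hcon
    have := hv₀.1.1
    rw [hcon] at this
    simp at this
  have hspan : Submodule.span ℝ {v₀} = Dᗮ := by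
    apply Submodule.eq_of_le_of_finrank_eq
    · rw [Submodule.span_le, Set.singleton_subset_iff]
      exact hv₀D
    · rw [finrank_span_singleton hv₀ne, hdimperp]
  have hvmem : v ∈ Submodule.span ℝ ({v₀} : Set (Euc n)) := by
    rw [hspan]; exact hvD
  obtain ⟨c, hc⟩ := Submodule.mem_span_singleton.mp hvmem
  have hcnorm : |c| = 1 := by
    have h1 : ‖v‖ = 1 := hv.1.1
    rw [← hc, norm_smul, Real.norm_eq_abs, hv₀.1.1, mul_one] at h1
    exact h1
  rcases abs_eq (by norm_num : (0:ℝ) ≤ 1) |>.mp hcnorm with h1 | h1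
  · left
    rw [← hc, h1, one_smul]
  · right
    rw [Set.mem_singleton_iff, ← hc, h1]
    simp

end NormalsFinite
/-- For any real vector space `V` and any function `f : ℝ × S^{n−1} → V`
(modelled as `f : ℝ → Euc n → V`; only values at unit vectors matter), the map
`Φ P = Σ_{v ∈ 𝒩(P)} vol_{n−1}(F(P,v)) • f(h(P,v), v)` is a valuation on `𝒫ⁿ`. -/
theorem stmt7 (n : ℕ) (hn : 1 ≤ n) {V : Type*} [AddCommGroup V] [Module ℝ V]
    (f : ℝ → Euc n → V) (Φ : Set (Euc n) → V)
    (hΦ : ∀ P : Set (Euc n),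
      Φ P = ∑ᶠ v ∈ normals n P, voln1 (face P v) • f (suppFn P v) v) :
    ∀ P Q : Set (Euc n), IsPolytope n P → IsPolytope n Q → IsPolytope n (P ∪ Q) →
      Φ (P ∪ Q) + Φ (P ∩ Q) = Φ P + Φ Q := by
  intro P Q hP hQ hPQ
  classical
  have hrw : ∀ R : Set (Euc n), Φ R = ∑ᶠ v, contrib n f R v := by
    intro R
    rw [hΦ R]
    exact finsum_mem_def _ _
  have hpt : ∀ v, contrib n f (P ∪ Q) v + contrib n f (P ∩ Q) v
      = contrib n f P v + contrib n f Q v :=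
    key_pointwise hn f hP.isCompact hP.nonempty hQ.isCompact hQ.nonempty hPQ.convex
  have hsupp : ∀ R : Set (Euc n), IsPolytope n R →
      (Function.support (contrib n f R)).Finite := by
    intro R hR
    exact (normals_finite hR).subset (fun v hv => Set.support_indicator_subset hv)
  have hsP := hsupp P hP
  have hsQ := hsupp Q hQ
  have hsU := hsupp _ hPQ
  have hsI : (Function.support (contrib n f (P ∩ Q))).Finite := by
    refine Set.Finite.subset (hsP.union (hsQ.union hsU)) ?_
    intro v hv
    by_contra hcon
    simp only [Set.mem_union, Function.mem_support, not_or, not_not] at hcon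
    have h := hpt v
    rw [hcon.1, hcon.2.1, hcon.2.2, zero_add, add_zero] at h
    exact hv h
  rw [hrw, hrw, hrw, hrw]
  rw [← finsum_add_distrib hsU hsI, ← finsum_add_distrib hsP hsQ]
  exact finsum_congr hpt
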